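/- Let Γ be a group and let ν_1, ν_2 be unitary representations of Γ on complex Hilbert spaces H_1, H_2. Suppose there exists a nonzero compact operator T : H_1 → H_2 intertwining the two representations, i.e. ν_2(g) ∘ T = T ∘ ν_1(g) for all g ∈ Γ. Then both representations possess nonzero finite-dimensional subrepresentations: there exist nonzero finite-dimensional subspaces V_1 ⊆ H_1 and V_2 ⊆ H_2 with ν_1(g)V_1 = V_1 and ν_2(g)V_2 = V_2 for all g ∈ Γ. -/

import Mathlib

open ContinuousLinearMap Filter Metric
open scoped InnerProductSpace Topology ComplexConjugate Pointwise

section Aux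

variable {H K : Type*}
  [NormedAddCommGroup H] [InnerProductSpace ℂ H] [CompleteSpace H]
  [NormedAddCommGroup K] [InnerProductSpace ℂ K] [CompleteSpace K]

/-- Key analytic lemma: `A†A` has `‖A‖²` as an eigenvalue, provided `A ≠ 0` and `A†A` is
compact. -/
lemma aux_exists_eigvec (A : H →L[ℂ] K) (hA0 : A ≠ 0)
    (hSc : IsCompactOperator ⇑(ContinuousLinearMap.adjoint A ∘L A)) :
    ∃ x : H, x ≠ 0 ∧
      (ContinuousLinearMap.adjoint A ∘L A) x = ((‖A‖ ^ 2 : ℝ) : ℂ) • x := by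
  set S := ContinuousLinearMap.adjoint A ∘L A with hSdef
  have hnA : 0 < ‖A‖ := norm_pos_iff.mpr hA0
  set μ : ℝ := ‖A‖ ^ 2 with hμdef
  have hμpos : 0 < μ := by positivity
  have hSnorm : ‖S‖ = μ := by
    rw [hSdef, ContinuousLinearMap.norm_adjoint_comp_self, hμdef]; ring
  -- choose an approximating sequence for the norm
  have hseq : ∀ n : ℕ, ∃ x : H, ‖x‖ < 1 ∧ ‖A‖ - 1 / (n + 1) < ‖A x‖ := fun n =>
    A.exists_lt_apply_of_lt_opNorm (by
      have : (0:ℝ) < 1 / (n + 1) := by positivity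
      linarith)
  choose u hu1 hu2 using hseq
  have hu1' : ∀ n, ‖u n‖ ≤ 1 := fun n => (hu1 n).le
  have hAu_le : ∀ n, ‖A (u n)‖ ≤ ‖A‖ := fun n => by
    calc ‖A (u n)‖ ≤ ‖A‖ * ‖u n‖ := A.le_opNorm _
    _ ≤ ‖A‖ * 1 := by
        have := hu1' n
        nlinarith
    _ = ‖A‖ := mul_one _
  have hAu : Tendsto (fun n => ‖A (u n)‖) atTop (𝓝 ‖A‖) := by
    refine tendsto_of_tendsto_of_tendsto_of_le_of_le
      (g := fun n : ℕ => ‖A‖ - 1 / (n + 1)) (h := fun _ : ℕ => ‖A‖) ?_ tendsto_const_nhds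
      (fun n => (hu2 n).le) (fun n => hAu_le n)
    have := tendsto_one_div_add_atTop_nhds_zero_nat (𝕜 := ℝ)
    have h2 := (tendsto_const_nhds (x := ‖A‖) (f := atTop (α := ℕ))).sub this
    simpa using h2
  have hAu2 : Tendsto (fun n => ‖A (u n)‖ ^ 2) atTop (𝓝 μ) := by
    simpa [hμdef] using hAu.pow 2
  -- the vectors S uₙ - μ uₙ tend to zero
  have hbound : ∀ n, ‖S (u n) - (μ : ℂ) • u n‖ ^ 2 ≤ 2 * μ ^ 2 - 2 * μ * ‖A (u n)‖ ^ 2 := by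
    intro n
    have h3 : ⟪S (u n), u n⟫_ℂ = ⟪A (u n), A (u n)⟫_ℂ := by
      rw [hSdef]
      simp only [ContinuousLinearMap.comp_apply]
      exact ContinuousLinearMap.adjoint_inner_left A _ _
    have h2 : ⟪S (u n), u n⟫_ℂ = ((‖A (u n)‖ : ℂ)) ^ 2 :=
      h3.trans (inner_self_eq_norm_sq_to_K _)
    have hre : RCLike.re ⟪S (u n), (μ : ℂ) • u n⟫_ℂ = μ * ‖A (u n)‖ ^ 2 := by
      rw [inner_smul_right, h2, ← Complex.ofReal_pow, ← Complex.ofReal_mul]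
      simp only [RCLike.re_to_complex, Complex.ofReal_re]
    have hSu : ‖S (u n)‖ ≤ μ := by
      calc ‖S (u n)‖ ≤ ‖S‖ * ‖u n‖ := S.le_opNorm _
      _ ≤ μ * 1 := by
          have := hu1' n
          have := hSnorm
          nlinarith [norm_nonneg S, S.le_opNorm (u n)]
      _ = μ := mul_one _
    have hμu : ‖(μ : ℂ) • u n‖ ≤ μ := by
      rw [norm_smul]
      have : ‖(μ : ℂ)‖ = μ := by
        simp [Complex.norm_real, abs_of_pos hμpos]
      rw [this]
      have := hu1' n
      nlinarith
    have hexp := @norm_sub_sq ℂ _ _ _ _ (S (u n)) ((μ : ℂ) • u n)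
    rw [hexp, hre]
    have h1 : ‖S (u n)‖ ^ 2 ≤ μ ^ 2 := by nlinarith [norm_nonneg (S (u n))]
    have h2 : ‖(μ : ℂ) • u n‖ ^ 2 ≤ μ ^ 2 := by nlinarith [norm_nonneg ((μ : ℂ) • u n)]
    nlinarith
  have hrhs : Tendsto (fun n => 2 * μ ^ 2 - 2 * μ * ‖A (u n)‖ ^ 2) atTop (𝓝 0) := by
    have h : Tendsto (fun n => 2 * μ ^ 2 - 2 * μ * ‖A (u n)‖ ^ 2) atTop
        (𝓝 (2 * μ ^ 2 - 2 * μ * μ)) := (hAu2.const_mul (2 * μ)).const_sub _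
    have e : 2 * μ ^ 2 - 2 * μ * μ = 0 := by ring
    rwa [e] at h
  have hv : Tendsto (fun n => S (u n) - (μ : ℂ) • u n) atTop (𝓝 0) := by
    rw [tendsto_zero_iff_norm_tendsto_zero]
    refine tendsto_of_tendsto_of_tendsto_of_le_of_le
      (g := fun _ : ℕ => (0:ℝ))
      (h := fun n : ℕ => Real.sqrt (2 * μ ^ 2 - 2 * μ * ‖A (u n)‖ ^ 2))
      tendsto_const_nhds ?_ (fun n => norm_nonneg (S (u n) - (μ : ℂ) • u n)) ?_
    · have := hrhs.sqrt
      simpa using this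
    · intro n
      have h := hbound n
      have h0 : (0:ℝ) ≤ 2 * μ ^ 2 - 2 * μ * ‖A (u n)‖ ^ 2 := le_trans (by positivity) h
      calc ‖S (u n) - (μ : ℂ) • u n‖
          = Real.sqrt (‖S (u n) - (μ : ℂ) • u n‖ ^ 2) := by
            rw [Real.sqrt_sq (norm_nonneg _)]
        _ ≤ Real.sqrt (2 * μ ^ 2 - 2 * μ * ‖A (u n)‖ ^ 2) := Real.sqrt_le_sqrt h
  -- use compactness to extract a convergent subsequence of S uₙ
  obtain ⟨Kc, hKcomp, hKsub⟩ := hSc.image_closedBall_subset_compact 1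
  have hmem : ∀ n, S (u n) ∈ Kc := fun n =>
    hKsub (Set.mem_image_of_mem _ (by simpa [mem_closedBall, dist_zero_right] using hu1' n))
  obtain ⟨y, -, φ, hφ, hy⟩ := hKcomp.tendsto_subseq hmem
  have hφtop : Tendsto φ atTop atTop := hφ.tendsto_atTop
  have hμu : Tendsto (fun n => (μ : ℂ) • u (φ n)) atTop (𝓝 y) := by
    have h1 : Tendsto (fun n => S (u (φ n)) - (S (u (φ n)) - (μ : ℂ) • u (φ n)))
        atTop (𝓝 (y - 0)) := hy.sub ((hv.comp hφtop))
    simpa using h1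
  have hμC : (μ : ℂ) ≠ 0 := Complex.ofReal_ne_zero.mpr hμpos.ne'
  set x : H := (μ : ℂ)⁻¹ • y with hxdef
  have hux : Tendsto (fun n => u (φ n)) atTop (𝓝 x) := by
    have h := hμu.const_smul ((μ : ℂ)⁻¹)
    rw [← hxdef] at h
    exact Tendsto.congr (fun n => inv_smul_smul₀ hμC _) h
  have hyx : y = (μ : ℂ) • x := by
    rw [hxdef, smul_inv_smul₀ hμC]
  have hSx : S x = ((μ : ℝ) : ℂ) • x := by
    have h1 : Tendsto (fun n => S (u (φ n))) atTop (𝓝 (S x)) :=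
      (S.continuous.tendsto x).comp hux
    have h2 := tendsto_nhds_unique h1 hy
    rw [h2, hyx]
  have hAx : ‖A x‖ = ‖A‖ := by
    have h1 : Tendsto (fun n => ‖A (u (φ n))‖) atTop (𝓝 ‖A x‖) :=
      ((A.continuous.tendsto x).comp hux).norm
    exact tendsto_nhds_unique h1 (hAu.comp hφtop)
  have hx0 : x ≠ 0 := by
    intro h
    rw [h] at hAx
    simp at hAx
    exact hnA.ne' hAx.symm
  exact ⟨x, hx0, hSx⟩

/-- Eigenspaces of a compact operator for nonzero eigenvalues are finite dimensional. -/
lemma aux_eig_findim (S : H →L[ℂ] H) (hSc : IsCompactOperator ⇑S) {c : ℂ} (hc : c ≠ 0) :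
    FiniteDimensional ℂ (Module.End.eigenspace (S : H →ₗ[ℂ] H) c) := by
  set V : Submodule ℂ H := Module.End.eigenspace (S : H →ₗ[ℂ] H) c with hVdef
  have hmemV : ∀ z : H, z ∈ V ↔ S z = c • z := by
    intro z
    rw [hVdef, Module.End.mem_eigenspace_iff]
    rfl
  have hVclosed : IsClosed (V : Set H) := by
    have : (V : Set H) = {z : H | S z = c • z} := by
      ext z; exact hmemV z
    rw [this]
    exact isClosed_eq S.continuous (continuous_id.const_smul c)
  obtain ⟨Kc, hKcomp, hKsub⟩ := hSc.image_closedBall_subset_compact 1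
  set B : Set H := (V : Set H) ∩ closedBall 0 1 with hBdef
  have hBsub : B ⊆ c⁻¹ • Kc := by
    rintro z ⟨hz1, hz2⟩
    rw [Set.mem_smul_set_iff_inv_smul_mem₀ (inv_ne_zero hc), inv_inv]
    have : S z = c • z := (hmemV z).1 hz1
    rw [← this]
    exact hKsub (Set.mem_image_of_mem _ hz2)
  have hBcomp : IsCompact B :=
    (hKcomp.smul c⁻¹).of_isClosed_subset (hVclosed.inter isClosed_closedBall) hBsub
  have hball : closedBall (0 : V) 1 = (Subtype.val : V → H) ⁻¹' B := by
    ext v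
    simp only [hBdef, Set.mem_preimage, Set.mem_inter_iff, SetLike.mem_coe,
      mem_closedBall, dist_zero_right]
    constructor
    · intro h
      exact ⟨v.2, by simpa using h⟩
    · intro h
      simpa using h.2
  have hcomp : IsCompact (closedBall (0 : V) 1) := by
    rw [hball]
    exact hVclosed.isClosedEmbedding_subtypeVal.isProperMap.isCompact_preimage hBcomp
  exact FiniteDimensional.of_isCompact_closedBall₀ ℂ one_pos hcomp

/-- One side of the main theorem, done abstractly. -/
lemma aux_side {Γ : Type*} [Group Γ] (ν : Γ →* (H ≃ₗᵢ[ℂ] H)) (A : H →L[ℂ] K)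
    (hA0 : A ≠ 0)
    (hSc : IsCompactOperator ⇑(ContinuousLinearMap.adjoint A ∘L A))
    (hcomm : ∀ (g : Γ) (z : H),
      (ContinuousLinearMap.adjoint A ∘L A) (ν g z) =
        ν g ((ContinuousLinearMap.adjoint A ∘L A) z)) :
    ∃ V : Submodule ℂ H, V ≠ ⊥ ∧ FiniteDimensional ℂ V ∧
      ∀ g : Γ, (ν g) '' (V : Set H) = V := by
  set S := ContinuousLinearMap.adjoint A ∘L A with hSdef
  set c : ℂ := ((‖A‖ ^ 2 : ℝ) : ℂ) with hcdef
  have hc : c ≠ 0 := by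
    have hnA : 0 < ‖A‖ := norm_pos_iff.mpr hA0
    exact Complex.ofReal_ne_zero.mpr (pow_pos hnA 2).ne'
  set V : Submodule ℂ H := Module.End.eigenspace (S : H →ₗ[ℂ] H) c with hVdef
  have hmemV : ∀ z : H, z ∈ V ↔ S z = c • z := by
    intro z
    rw [hVdef, Module.End.mem_eigenspace_iff]
    rfl
  obtain ⟨x, hx0, hSx⟩ := aux_exists_eigvec A hA0 hSc
  refine ⟨V, ?_, ?_, ?_⟩
  · rw [Submodule.ne_bot_iff]
    exact ⟨x, (hmemV x).2 hSx, hx0⟩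
  · exact aux_eig_findim S hSc hc
  · -- invariance
    have hsub : ∀ g : Γ, (ν g) '' (V : Set H) ⊆ V := by
      rintro g _ ⟨v, hv, rfl⟩
      have hv' : S v = c • v := (hmemV v).1 hv
      have : S (ν g v) = c • (ν g v) := by
        rw [hcomm g v, hv']
        simp
      exact (hmemV _).2 this
    intro g
    refine Set.Subset.antisymm (hsub g) ?_
    intro w hw
    have hkey : ν g ((ν g⁻¹) w) = w := by
      have h1 : (ν g * ν g⁻¹) w = w := by
        rw [← map_mul, mul_inv_cancel, map_one]
        rfl
      simpa using h1
    refine ⟨(ν g⁻¹) w, ?_, hkey⟩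
    have := hsub g⁻¹ ⟨w, hw, rfl⟩
    exact this

end Aux

/-- If there is a nonzero compact operator `T : H₁ → H₂` intertwining two
unitary representations `ν₁`, `ν₂` of a group `Γ`, then both representations possess
nonzero finite-dimensional subrepresentations. -/
theorem exists_finiteDimensional_subrepresentations_of_compact_intertwiner
    {Γ : Type*} [Group Γ] {H₁ H₂ : Type*}
    [NormedAddCommGroup H₁] [InnerProductSpace ℂ H₁] [CompleteSpace H₁]
    [NormedAddCommGroup H₂] [InnerProductSpace ℂ H₂] [CompleteSpace H₂]
    (ν₁ : Γ →* (H₁ ≃ₗᵢ[ℂ] H₁)) (ν₂ : Γ →* (H₂ ≃ₗᵢ[ℂ] H₂))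
    (T : H₁ →L[ℂ] H₂) (hT0 : T ≠ 0) (hTc : IsCompactOperator T)
    (hint : ∀ (g : Γ) (x : H₁), ν₂ g (T x) = T (ν₁ g x)) :
    (∃ V₁ : Submodule ℂ H₁, V₁ ≠ ⊥ ∧ FiniteDimensional ℂ V₁ ∧
      ∀ g : Γ, (ν₁ g) '' (V₁ : Set H₁) = V₁) ∧
    (∃ V₂ : Submodule ℂ H₂, V₂ ≠ ⊥ ∧ FiniteDimensional ℂ V₂ ∧
      ∀ g : Γ, (ν₂ g) '' (V₂ : Set H₂) = V₂) := by
  set A := ContinuousLinearMap.adjoint T with hAdef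
  -- cancellation helpers
  have hν₁ : ∀ (g : Γ) (z : H₁), ν₁ g ((ν₁ g⁻¹) z) = z := by
    intro g z
    have h1 : (ν₁ g * ν₁ g⁻¹) z = z := by
      rw [← map_mul, mul_inv_cancel, map_one]; rfl
    simpa using h1
  -- the adjoint also intertwines
  have haux : ∀ (g : Γ) (y : H₂), A (ν₂ g y) = ν₁ g (A y) := by
    intro g y
    refine ext_inner_right ℂ fun z => ?_
    calc ⟪A (ν₂ g y), z⟫_ℂ = ⟪ν₂ g y, T z⟫_ℂ := ContinuousLinearMap.adjoint_inner_left T _ _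
      _ = ⟪ν₂ g y, ν₂ g (T ((ν₁ g⁻¹) z))⟫_ℂ := by
          rw [hint g ((ν₁ g⁻¹) z), hν₁ g z]
      _ = ⟪y, T ((ν₁ g⁻¹) z)⟫_ℂ := (ν₂ g).inner_map_map _ _
      _ = ⟪A y, (ν₁ g⁻¹) z⟫_ℂ := (ContinuousLinearMap.adjoint_inner_left T _ _).symm
      _ = ⟪ν₁ g (A y), ν₁ g ((ν₁ g⁻¹) z)⟫_ℂ := ((ν₁ g).inner_map_map _ _).symm
      _ = ⟪ν₁ g (A y), z⟫_ℂ := by rw [hν₁ g z]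
  constructor
  · -- H₁ side with operator T
    refine aux_side ν₁ T hT0 ?_ ?_
    · have h := hTc.continuous_comp A.continuous
      exact h
    · intro g z
      have : A (T (ν₁ g z)) = ν₁ g (A (T z)) := by
        rw [← hint g z, haux g (T z)]
      simpa using this
  · -- H₂ side with operator A = T†
    have hA0 : A ≠ 0 := by
      intro h
      apply hT0
      ext z
      have h1 : ‖T z‖ ^ 2 = RCLike.re ⟪(A ∘L T) z, z⟫_ℂ :=
        T.apply_norm_sq_eq_inner_adjoint_left z
      have h2 : (A ∘L T) z = 0 := by simp [h]
      rw [h2] at h1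
      simp only [inner_zero_left, map_zero] at h1
      have : ‖T z‖ = 0 := by nlinarith [norm_nonneg (T z)]
      simpa [norm_eq_zero] using this
    have hadj : ContinuousLinearMap.adjoint A = T := by
      rw [hAdef, ContinuousLinearMap.adjoint_adjoint]
    refine aux_side ν₂ A hA0 ?_ ?_
    · rw [hadj]
      have h := hTc.comp_clm A
      exact h
    · intro g z
      have : T (A (ν₂ g z)) = ν₂ g (T (A z)) := by
        rw [haux g z, hint g (A z)]
      simpa [hadj] using this
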